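/- Envelopes for ATO-TOS arrivals (Proposition 4.2): let A ⊆ {1,…,I} with |A| ≥ 2 and m ≤ M in X, and set m' = componentwise minimum and M' = componentwise maximum of the set {f_T(x, d_A) : x ∈ X, m ≤ x ≤ M}. Then: (I) if M_i < C_i for all i ∈ A, then m' = m + Σ_{i∈A} e_i and M' = M + Σ_{i∈A} e_i; (II) if m_{i_0} = C_{i_0} for some i_0 ∈ A, then m' = m and M' = M; (III) otherwise (there exists i_0 ∈ A with M_{i_0} = C_{i_0}, and m_i < C_i for all i ∈ A): M'_i = M_i + 1{i ∈ A and M_i < C_i} for every i, while m'_i = m_i for every i ≠ i_0 and m'_{i_0} = m_{i_0} + ∏_{k∈A∖{i_0}} 1{M_k < C_k}. -/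

import Mathlib

open MeasureTheory Finset ENNReal

namespace ATO

/-- Events: joint arrivals `d A` for subsets `A`, and services `s i j`. -/
inductive Ev (I : ℕ) where
  | d : Finset (Fin I) → Ev I
  | s : Fin I → ℕ → Ev I

instance (I : ℕ) : MeasurableSpace (Ev I) := ⊤

/-- Valid events: arrivals for nonempty `A`, services `s i j` with `1 ≤ j ≤ C i`. -/
def ValidEv {I : ℕ} (C : Fin I → ℕ) : Ev I → Prop
  | .d A => A.Nonempty
  | .s i j => 1 ≤ j ∧ j ≤ C i

/-- The state space `X = {0,…,C 1} × ⋯ × {0,…,C I}`. -/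
def Xspace {I : ℕ} (C : Fin I → ℕ) : Set (Fin I → ℕ) := {x | ∀ i, x i ≤ C i}

/-- ATO-POS transition function with individual replenishments. -/
noncomputable def fP {I : ℕ} (C : Fin I → ℕ) (μ : Fin I → ℕ → ℝ) (ℓ : Fin I → ℕ → ℕ)
    (x : Fin I → ℕ) : Ev I → (Fin I → ℕ)
  | .d A => fun k => x k + if k ∈ A ∧ x k < C k then 1 else 0
  | .s i j => fun k => if k = i ∧ μ i (ℓ i j) ≤ μ i (x i) then x k - 1 else x k

/-- ATO-TOS transition function with individual replenishments. -/
noncomputable def fT {I : ℕ} (C : Fin I → ℕ) (μ : Fin I → ℕ → ℝ) (ℓ : Fin I → ℕ → ℕ)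
    (x : Fin I → ℕ) : Ev I → (Fin I → ℕ)
  | .d A => fun k => x k + if k ∈ A ∧ (∀ i ∈ A, x i < C i) then 1 else 0
  | .s i j => fP C μ ℓ x (.s i j)

/-- Iterated application of a transition function along a word (head applied first). -/
def iter {I : ℕ} {σ : Type*} (f : σ → Ev I → σ) : σ → List (Ev I) → σ
  | x, [] => x
  | x, a :: w => iter f (f x a) w

/-- The backward word `u_t u_{t-1} ⋯ u_1` (with `u_t` applied first). -/
def bword {I : ℕ} (ω : ℕ → Ev I) (t : ℕ) : List (Ev I) :=
  ((List.range t).reverse).map fun s => ω (s + 1)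

/-- The forward word `u_1 u_2 ⋯ u_t` (with `u_1` applied first). -/
def fword {I : ℕ} (ω : ℕ → Ev I) (t : ℕ) : List (Ev I) :=
  (List.range t).map fun s => ω (s + 1)

/-- The distribution `ν` on events: `ν (d A) = λ_A / Λ`, `ν (s i j) = (μ_i(ℓ_i^{(j)}) − μ_i(ℓ_i^{(j-1)}))/Λ`. -/
noncomputable def probA {I : ℕ} (C : Fin I → ℕ) (μ : Fin I → ℕ → ℝ) (ℓ : Fin I → ℕ → ℕ)
    (lam : Finset (Fin I) → ℝ) (Λ : ℝ) : Ev I → ℝ≥0∞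
  | .d A => if A.Nonempty then ENNReal.ofReal (lam A / Λ) else 0
  | .s i j => if 1 ≤ j ∧ j ≤ C i then ENNReal.ofReal ((μ i (ℓ i j) - μ i (ℓ i (j - 1))) / Λ) else 0

/-- Proposition 4.2: envelopes for ATO-TOS arrivals `d_A` with `|A| ≥ 2`. -/
theorem stmt6 (I : ℕ) (hI : 1 ≤ I) (C : Fin I → ℕ) (hC : ∀ i, 1 ≤ C i)
    (μ : Fin I → ℕ → ℝ) (hμ0 : ∀ i, μ i 0 = 0) (hμnn : ∀ i k, k ≤ C i → 0 ≤ μ i k)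
    (ℓ : Fin I → ℕ → ℕ) (hℓ : ∀ i, Set.BijOn (ℓ i) (Set.Iic (C i)) (Set.Iic (C i)))
    (hsort : ∀ i j, j < C i → μ i (ℓ i j) ≤ μ i (ℓ i (j + 1)))
    (A : Finset (Fin I)) (hA : 2 ≤ A.card)
    (m M : Fin I → ℕ) (hm : m ∈ Xspace C) (hM : M ∈ Xspace C) (hmM : m ≤ M)
    (m' M' : Fin I → ℕ)
    (hm' : ∀ p, IsLeast ((fun x => fT C μ ℓ x (.d A) p) '' Set.Icc m M) (m' p))
    (hM' : ∀ p, IsGreatest ((fun x => fT C μ ℓ x (.d A) p) '' Set.Icc m M) (M' p)) :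
    -- Case I
    ((∀ i ∈ A, M i < C i) →
      m' = (fun k => m k + if k ∈ A then 1 else 0) ∧
      M' = (fun k => M k + if k ∈ A then 1 else 0))
    -- Case II
    ∧ ((∃ i0 ∈ A, m i0 = C i0) → m' = m ∧ M' = M)
    -- Case III
    ∧ (((∃ i0 ∈ A, M i0 = C i0) ∧ ∀ i ∈ A, m i < C i) →
      ((∀ i, M' i = M i + if i ∈ A ∧ M i < C i then 1 else 0) ∧
        ∀ i0 ∈ A, M i0 = C i0 →
          ((∀ i, i ≠ i0 → m' i = m i) ∧
            m' i0 = m i0 + if ∀ k ∈ A, k ≠ i0 → M k < C k then 1 else 0))) := by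
  have hval : ∀ x p, fT C μ ℓ x (.d A) p
      = x p + if p ∈ A ∧ (∀ i ∈ A, x i < C i) then 1 else 0 := fun x p => rfl
  refine ⟨?_, ?_, ?_⟩
  · -- Case I
    intro h
    have hcond : ∀ x ∈ Set.Icc m M, ∀ i ∈ A, x i < C i :=
      fun x hx i hi => lt_of_le_of_lt (hx.2 i) (h i hi)
    constructor
    · funext p
      refine (hm' p).unique ⟨⟨m, ⟨le_rfl, hmM⟩, ?_⟩, ?_⟩
      · simp only [hval]
        simp only [and_iff_left (hcond m ⟨le_rfl, hmM⟩)]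
      · rintro v ⟨x, hx, rfl⟩
        simp only [hval]
        simp only [and_iff_left (hcond x hx)]
        exact add_le_add (hx.1 p) le_rfl
    · funext p
      refine ((hM' p).unique ⟨⟨M, ⟨hmM, le_rfl⟩, ?_⟩, ?_⟩).symm.symm
      · simp only [hval]
        simp only [and_iff_left (hcond M ⟨hmM, le_rfl⟩)]
      · rintro v ⟨x, hx, rfl⟩
        simp only [hval]
        simp only [and_iff_left (hcond x hx)]
        exact add_le_add (hx.2 p) le_rfl
  · -- Case II
    rintro ⟨i0, hi0A, hi0⟩
    have hfail : ∀ x ∈ Set.Icc m M, ¬ (∀ i ∈ A, x i < C i) := by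
      intro x hx h
      have h1 : m i0 ≤ x i0 := hx.1 i0
      have h2 : x i0 < C i0 := h i0 hi0A
      omega
    constructor
    · funext p
      refine (hm' p).unique ⟨⟨m, ⟨le_rfl, hmM⟩, ?_⟩, ?_⟩
      · simp only [hval]; simp [hfail m ⟨le_rfl, hmM⟩]
      · rintro v ⟨x, hx, rfl⟩
        simp only [hval]; simp only [hfail x hx, and_false, if_false, add_zero]
        exact hx.1 p
    · funext p
      refine (hM' p).unique ⟨⟨M, ⟨hmM, le_rfl⟩, ?_⟩, ?_⟩
      · simp only [hval]; simp [hfail M ⟨hmM, le_rfl⟩]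
      · rintro v ⟨x, hx, rfl⟩
        simp only [hval]; simp only [hfail x hx, and_false, if_false, add_zero]
        exact hx.2 p
  · -- Case III
    rintro ⟨⟨j0, hj0A, hj0⟩, hmlt⟩
    constructor
    · -- M' part
      intro i
      by_cases hi : i ∈ A ∧ M i < C i
      · rw [if_pos hi]
        set x := Function.update m i (M i) with hxdef
        have hxm : m ≤ x := by
          intro k
          by_cases hk : k = i
          · subst hk; simp [hxdef, hmM k]
          · simp [hxdef, Function.update_of_ne hk]
        have hxM : x ≤ M := by
          intro k
          by_cases hk : k = i
          · subst hk; simp [hxdef]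
          · simp [hxdef, Function.update_of_ne hk, hmM k]
        have hcond : ∀ k ∈ A, x k < C k := by
          intro k hk
          by_cases hki : k = i
          · subst hki; simp [hxdef, hi.2]
          · simp only [hxdef, Function.update_of_ne hki]
            exact hmlt k hk
        refine (hM' i).unique ⟨⟨x, ⟨hxm, hxM⟩, ?_⟩, ?_⟩
        · simp only [hval]
          rw [if_pos ⟨hi.1, hcond⟩]
          simp [hxdef]
        · rintro v ⟨y, hy, rfl⟩
          simp only [hval]
          have h1 : y i ≤ M i := hy.2 i
          split <;> omega
      · rw [if_neg hi, add_zero]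
        have hcondM : ¬ (∀ k ∈ A, M k < C k) := by
          intro h; have := h j0 hj0A; omega
        refine (hM' i).unique ⟨⟨M, ⟨hmM, le_rfl⟩, ?_⟩, ?_⟩
        · simp only [hval]; simp [hcondM]
        · rintro v ⟨y, hy, rfl⟩
          simp only [hval]
          have h1 : y i ≤ M i := hy.2 i
          have h2 : M i ≤ C i := hM i
          by_cases hc : i ∈ A ∧ (∀ k ∈ A, y k < C k)
          · rw [if_pos hc]
            have h3 := hc.2 i hc.1
            have h4 : ¬ M i < C i := fun hlt => hi ⟨hc.1, hlt⟩
            omega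
          · rw [if_neg hc]; omega
    · -- m' part
      intro i0 hi0A hMi0
      constructor
      · intro i hii0
        set x := Function.update m i0 (C i0) with hxdef
        have hxm : m ≤ x := by
          intro k
          by_cases hk : k = i0
          · subst hk; simp [hxdef, hm k]
          · simp [hxdef, Function.update_of_ne hk]
        have hxM : x ≤ M := by
          intro k
          by_cases hk : k = i0
          · subst hk; simp [hxdef, hMi0.ge]
          · simp [hxdef, Function.update_of_ne hk, hmM k]
        have hcond : ¬ (∀ k ∈ A, x k < C k) := by
          intro h
          have := h i0 hi0A
          simp [hxdef] at this
        refine (hm' i).unique ⟨⟨x, ⟨hxm, hxM⟩, ?_⟩, ?_⟩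
        · simp only [hval]; simp [hcond, hxdef, Function.update_of_ne hii0]; exact fun _ => ⟨i0, hi0A, by simp⟩
        · rintro v ⟨y, hy, rfl⟩
          simp only [hval]
          have h1 : m i ≤ y i := hy.1 i
          split <;> omega
      · by_cases hall : ∀ k ∈ A, k ≠ i0 → M k < C k
        · rw [if_pos hall]
          refine (hm' i0).unique ⟨⟨m, ⟨le_rfl, hmM⟩, ?_⟩, ?_⟩
          · simp only [hval]; rw [if_pos ⟨hi0A, hmlt⟩]
          · rintro v ⟨y, hy, rfl⟩
            simp only [hval]
            by_cases hc : ∀ k ∈ A, y k < C k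
            · rw [if_pos ⟨hi0A, hc⟩]
              have h1 : m i0 ≤ y i0 := hy.1 i0
              omega
            · push_neg at hc
              obtain ⟨k, hkA, hk⟩ := hc
              have hk2 : y k ≤ M k := hy.2 k
              have hki0 : k = i0 := by
                by_contra hne
                have := hall k hkA hne
                omega
              subst hki0
              have h3 : m k < C k := hmlt k hkA
              have h4 : m k ≤ y k := hy.1 k
              split <;> omega
        · rw [if_neg hall, add_zero]
          push_neg at hall
          obtain ⟨k, hkA, hki0, hk⟩ := hall
          have hMk : M k = C k := le_antisymm (hM k) hk
          set x := Function.update m k (C k) with hxdef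
          have hxm : m ≤ x := by
            intro j
            by_cases hj : j = k
            · subst hj; simp [hxdef, hm j]
            · simp [hxdef, Function.update_of_ne hj]
          have hxM : x ≤ M := by
            intro j
            by_cases hj : j = k
            · subst hj; simp [hxdef, hMk.ge]
            · simp [hxdef, Function.update_of_ne hj, hmM j]
          have hcond : ¬ (∀ j ∈ A, x j < C j) := by
            intro h
            have := h k hkA
            simp [hxdef] at this
          refine (hm' i0).unique ⟨⟨x, ⟨hxm, hxM⟩, ?_⟩, ?_⟩
          · simp only [hval]
            have hne : i0 ≠ k := fun h => hki0 h.symm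
            simp [hcond, hxdef, Function.update_of_ne hne]
            exact fun _ => ⟨k, hkA, by simp⟩
          · rintro v ⟨y, hy, rfl⟩
            simp only [hval]
            have h1 : m i0 ≤ y i0 := hy.1 i0
            split <;> omega

end ATO
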